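/- Let ξ, k be scalars and let A = span(e₁,e₂,e₃) with products ∘ and [·,·] given by the nonzero relations e₁∘e₁ = (2+2ξ)e₂, e₁∘e₂ = (4+2ξ)e₃, e₂∘e₁ = (2+2ξ)e₃, and [e₁,e₂] = 2k e₃ = −[e₂,e₁]. Then (A, ∘, [·,·]) is a GD algebra. -/

import Mathlib

def IsNovikov {A : Type*} [AddCommGroup A] (circ : A → A → A) : Prop :=
  (∀ a b c : A, circ (circ a b) c - circ a (circ b c) = circ (circ b a) c - circ b (circ a c)) ∧
  (∀ a b c : A, circ (circ a b) c = circ (circ a c) b)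

def IsLieBr {A : Type*} [AddCommGroup A] (br : A → A → A) : Prop :=
  (∀ a b : A, br a b = - br b a) ∧
  (∀ a b c : A, br (br a b) c + br (br b c) a + br (br c a) b = 0)

def IsGD {A : Type*} [AddCommGroup A] (circ br : A → A → A) : Prop :=
  IsNovikov circ ∧ IsLieBr br ∧
  (∀ a b c : A, br (circ a b) c - br (circ a c) b + circ (br a b) c
      - circ (br a c) b - circ a (br b c) = 0)
theorem stmt12 {k : Type*} [Field k] (ξ κ : k)
    (circ br : (k × k × k) → (k × k × k) → (k × k × k))
    (hcirc : ∀ a b, circ a b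
      = (0, (2 + 2 * ξ) * (a.1 * b.1),
          (4 + 2 * ξ) * (a.1 * b.2.1) + (2 + 2 * ξ) * (a.2.1 * b.1)))
    (hbr : ∀ a b, br a b = (0, 0, 2 * κ * (a.1 * b.2.1 - a.2.1 * b.1))) :
    IsGD circ br := by
  refine ⟨⟨fun a b c => ?_, fun a b c => ?_⟩, ⟨fun a b => ?_, fun a b c => ?_⟩, fun a b c => ?_⟩ <;>
      simp only [hcirc, hbr, Prod.mk_sub_mk, Prod.mk_add_mk, Prod.neg_mk, Prod.mk.injEq,
        Prod.ext_iff, Prod.fst_sub, Prod.snd_sub, Prod.fst_add, Prod.snd_add, Prod.fst_zero,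
        Prod.snd_zero, true_and] <;>
      and_intros <;> ring
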